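/- For the coefficients α = (s−a)/(2s), β = (s−b)/(2s), γ = (s−c)/(2s), one has a²βγ + b²αγ + c²αβ = rR − r², where r = F/s is the inradius, rR = abc/(4s), and F² = s(s−a)(s−b)(s−c). -/

import Mathlib

theorem incircle_coefficient_identity
    (a b c s F r R : ℝ)
    (ha0 : 0 < a) (hb0 : 0 < b) (hc0 : 0 < c)
    (hab : a < b + c) (hbc : b < a + c) (hca : c < a + b)
    (hs : s = (a + b + c) / 2)
    (hF : F = Real.sqrt (s * (s - a) * (s - b) * (s - c)))
    (hr : r = F / s)
    (hrR : r * R = a * b * c / (4 * s)) :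
    a ^ 2 * ((s - b) / (2 * s)) * ((s - c) / (2 * s)) +
      b ^ 2 * ((s - a) / (2 * s)) * ((s - c) / (2 * s)) +
      c ^ 2 * ((s - a) / (2 * s)) * ((s - b) / (2 * s)) = r * R - r ^ 2 := by
  have hs0 : 0 < s := by rw [hs]; linarith
  have hsa : 0 < s - a := by rw [hs]; linarith
  have hsb : 0 < s - b := by rw [hs]; linarith
  have hsc : 0 < s - c := by rw [hs]; linarith
  have hF2 : F ^ 2 = s * (s - a) * (s - b) * (s - c) := by
    rw [hF, sq, Real.mul_self_sqrt (by positivity)]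
  have hr2 : r ^ 2 = (s - a) * (s - b) * (s - c) / s := by
    rw [hr, div_pow, hF2]; field_simp
  rw [hrR, hr2]
  field_simp
  subst hs
  ring
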